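/- Standing setup: X is a nonempty compact metric space and f : X → X a homeomorphism; σ_1, …, σ_m are nonempty, pairwise disjoint, closed sets with f(σ_j) = σ_j; q_1, …, q_r are fixed points of f with pairwise disjoint open neighborhoods b_1, …, b_r such that cl(b_i) ⊆ f(b_i), ⋂_{k≥0} f^{-k}(b_i) = {q_i}, and each b_i is disjoint from σ_1 ∪ … ∪ σ_m; moreover for every x ∈ X both ω_f(x) and α_f(x) are contained in {q_1, …, q_r} ∪ σ_1 ∪ … ∪ σ_m. Set A = ⋂_{k≥0} f^k(X ∖ (b_1 ∪ … ∪ b_r)). Then { x : ω_f(x) ⊆ A } ∖ A = ⋃_{k∈ℤ} f^k( ⋃_{i=1}^r ( f(b_i) ∖ b_i ) ). -/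

import Mathlib

open Filter Topology Set

/-- The ω-limit set of a point `x` under a map `f`: all `y` such that
`f^[k j] x → y` for some sequence `k j → +∞`.  The α-limit set of `x` under a
homeomorphism `f` is the ω-limit set of `x` under `f⁻¹`. -/
def omegaSet {X : Type*} [TopologicalSpace X] (f : X → X) (x : X) : Set X :=
  { y | ∃ k : ℕ → ℕ, Tendsto k atTop atTop ∧
      Tendsto (fun j => f^[k j] x) atTop (𝓝 y) }

section Helpers

variable {X : Type*}

lemma pb_mem_zpow_image (e : Equiv.Perm X) (k : ℤ) (s : Set X) (x : X) :
    x ∈ ⇑(e ^ k) '' s ↔ ⇑(e ^ (-k)) x ∈ s := by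
  rw [Set.mem_image_equiv, ← Equiv.Perm.inv_def, ← zpow_neg]

lemma pb_image_zpow_image (e : Equiv.Perm X) (k : ℤ) (s : Set X) :
    ⇑(e ^ k) '' (⇑e '' s) = ⇑(e ^ (k + 1)) '' s := by
  rw [← Set.image_comp, ← Equiv.Perm.coe_mul, ← zpow_add_one]

lemma pb_chain_mono (e : Equiv.Perm X) {s : Set X} (hs : s ⊆ ⇑e '' s) :
    Monotone fun k : ℤ => ⇑(e ^ k) '' s := by
  apply monotone_int_of_le_succ
  intro k
  rw [show (⇑(e ^ (k + 1)) '' s) = ⇑(e ^ k) '' (⇑e '' s) from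
    (pb_image_zpow_image e k s).symm]
  exact Set.image_mono hs

lemma pb_exists_step (S : Set ℤ) :
    ∀ (n : ℕ) (l : ℤ), l ∉ S → l + (n : ℤ) ∈ S → ∃ t, t ∉ S ∧ t + 1 ∈ S := by
  intro n
  induction n with
  | zero => intro l h h'; rw [Int.ofNat_zero, add_zero] at h'; exact absurd h' h
  | succ n ih =>
    intro l h h'
    by_cases hl : l + 1 ∈ S
    · exact ⟨l, h, hl⟩
    · refine ih (l + 1) hl ?_
      have e : l + 1 + (n : ℤ) = l + ((n + 1 : ℕ) : ℤ) := by push_cast; ring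
      rw [e]; exact h'

end Helpers

/-- Final assertion of Lemma 2(1): the punctured basin of the attracting set
`A` equals the union of the integer iterates of the fundamental annuli
`f(b i) ∖ b i` around the sources. -/
theorem punctured_basin_of_attractor_eq_iterates_of_annuli
    {X : Type*} [MetricSpace X] [CompactSpace X] [Nonempty X]
    (f : X ≃ₜ X) (m r : ℕ)
    (σ : Fin m → Set X) (q : Fin r → X) (b : Fin r → Set X)
    (hσne : ∀ j, (σ j).Nonempty)
    (hσclosed : ∀ j, IsClosed (σ j))
    (hσdisj : ∀ j j', j ≠ j' → Disjoint (σ j) (σ j'))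
    (hσinv : ∀ j, ⇑f '' σ j = σ j)
    (hfix : ∀ i, f (q i) = q i)
    (hbopen : ∀ i, IsOpen (b i))
    (hqb : ∀ i, q i ∈ b i)
    (hbdisj : ∀ i i', i ≠ i' → Disjoint (b i) (b i'))
    (hexp : ∀ i, closure (b i) ⊆ ⇑f '' b i)
    (hbasin : ∀ i, (⋂ k : ℕ, (⇑f)^[k] ⁻¹' b i) = {q i})
    (hbσ : ∀ i j, Disjoint (b i) (σ j))
    (hω : ∀ x, omegaSet (⇑f) x ⊆ Set.range q ∪ ⋃ j, σ j)
    (hα : ∀ x, omegaSet (⇑f.symm) x ⊆ Set.range q ∪ ⋃ j, σ j)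
    (A : Set X) (hA : A = ⋂ k : ℕ, (⇑f)^[k] '' (⋃ i, b i)ᶜ) :
    { x | omegaSet (⇑f) x ⊆ A } \ A =
      ⋃ k : ℤ, ⇑(f.toEquiv ^ k : Equiv.Perm X) '' (⋃ i, (⇑f '' b i) \ b i) := by
  set F : Equiv.Perm X := f.toEquiv with hFdef
  have hco : ⇑F = ⇑f := rfl
  -- basic facts
  have hbf : ∀ i, b i ⊆ ⇑F '' b i := fun i => subset_closure.trans (hexp i)
  have hmono : ∀ i, Monotone fun k : ℤ => ⇑(F ^ k) '' b i :=
    fun i => pb_chain_mono F (hbf i)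
  have hiterF : ∀ n : ℕ, (⇑f)^[n] = ⇑(F ^ (n : ℤ)) := by
    intro n; rw [zpow_natCast]; rfl
  -- membership in A
  have hAiff : ∀ x, x ∈ A ↔ ∀ n : ℕ, ⇑(F ^ (-(n : ℤ))) x ∈ (⋃ i, b i)ᶜ := by
    intro x
    rw [hA, Set.mem_iInter]
    refine forall_congr' fun n => ?_
    rw [hiterF n]
    exact pb_mem_zpow_image F _ _ x
  -- each σ j is contained in A
  have hσiter : ∀ j (n : ℕ), (⇑f)^[n] '' σ j = σ j := by
    intro j n
    induction n with
    | zero => simp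
    | succ n ih =>
      rw [Function.iterate_succ', Set.image_comp, ih, hσinv]
  have hσA : ∀ j, σ j ⊆ A := by
    intro j
    rw [hA]
    refine Set.subset_iInter fun n => ?_
    rw [← hσiter j n]
    refine Set.image_mono fun y hy => ?_
    simp only [Set.mem_compl_iff, Set.mem_iUnion, not_exists]
    exact fun i hyi => Set.disjoint_left.mp (hbσ i j) hyi hy
  -- q i is fixed by all iterates
  have hqfix : ∀ i (k : ℤ), ⇑(F ^ k) (q i) = q i := by
    intro i k
    exact Equiv.Perm.zpow_apply_eq_self_of_apply_eq_self (hfix i) k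
  -- q i ∉ A
  have hqA : ∀ i, q i ∉ A := by
    intro i hqi
    rw [hA] at hqi
    have h0 := Set.mem_iInter.1 hqi 0
    simp only [Function.iterate_zero, Set.image_id] at h0
    exact h0 (Set.mem_iUnion.2 ⟨i, hqb i⟩)
  -- descending into b i
  have hdesc : ∀ i y, f y ∈ b i → y ∈ b i := by
    intro i y hy
    obtain ⟨z, hz, hzy⟩ := hbf i hy
    exact f.injective hzy ▸ hz
  have hdesc' : ∀ i (x : X) (n d : ℕ), (⇑f)^[n + d] x ∈ b i → (⇑f)^[n] x ∈ b i := by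
    intro i x n d
    induction d with
    | zero => exact fun h => h
    | succ d ih =>
      intro h
      rw [show n + (d + 1) = (n + d) + 1 from rfl, Function.iterate_succ_apply'] at h
      exact ih (hdesc i _ h)
  -- if q i' is an omega limit point of x then x = q i'
  have hqomega : ∀ i' x, q i' ∈ omegaSet (⇑f) x → x = q i' := by
    rintro i' x ⟨k, hk, hconv⟩
    have hev : ∀ᶠ j in atTop, (⇑f)^[k j] x ∈ b i' :=
      hconv.eventually ((hbopen i').eventually_mem (hqb i'))
    have hall : ∀ n : ℕ, (⇑f)^[n] x ∈ b i' := by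
      intro n
      obtain ⟨j, hj1, hj2⟩ := ((hk.eventually_ge_atTop n).and hev).exists
      have : (⇑f)^[n + (k j - n)] x ∈ b i' := by
        rwa [Nat.add_sub_cancel' hj1]
      exact hdesc' i' x n _ this
    have hx : x ∈ ({q i'} : Set X) := by
      rw [← hbasin i']
      exact Set.mem_iInter.2 fun n => hall n
    exact hx
  have hqω : ∀ i, q i ∈ omegaSet (⇑f) (q i) := by
    intro i
    refine ⟨id, tendsto_id, ?_⟩
    have hiq : ∀ n : ℕ, (⇑f)^[n] (q i) = q i := by
      intro n
      induction n with
      | zero => rfl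
      | succ n ih => rw [Function.iterate_succ_apply', ih, hfix]
    simp only [id_eq, hiq]
    exact tendsto_const_nhds
  -- main equality
  ext x
  simp only [Set.mem_diff, Set.mem_setOf_eq, Set.mem_iUnion]
  constructor
  · rintro ⟨hωx, hxA⟩
    -- x ∉ A gives some i, n with F^(-n) x ∈ b i
    obtain ⟨n, hn⟩ := not_forall.mp (fun h => hxA ((hAiff x).2 h))
    obtain ⟨i, hi⟩ := Set.mem_iUnion.1 (Set.not_notMem.1 hn)
    have hnS : x ∈ ⇑(F ^ (n : ℤ)) '' b i := (pb_mem_zpow_image F _ _ x).2 hi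
    -- x ≠ q i'
    have hxq : ∀ i', x ≠ q i' := by
      intro i' hxe
      refine hqA i' (hωx ?_)
      rw [hxe]; exact hqω i'
    -- there is l with x ∉ F^l '' b i
    set S : Set ℤ := {l : ℤ | x ∈ ⇑(F ^ l) '' b i} with hSdef
    have hSmono : ∀ {l l' : ℤ}, l ≤ l' → l ∈ S → l' ∈ S := fun h hl => hmono i h hl
    have hout : ∃ l, l ∉ S := by
      by_contra hc
      push_neg at hc
      refine hxq i ?_
      have hx : x ∈ ({q i} : Set X) := by
        rw [← hbasin i]
        refine Set.mem_iInter.2 fun nn => ?_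
        have := hc (-(nn : ℤ))
        have h2 : ⇑(F ^ (-(-(nn : ℤ)))) x ∈ b i := (pb_mem_zpow_image F _ _ x).1 this
        rw [neg_neg] at h2
        rw [Set.mem_preimage, hiterF nn]
        exact h2
      exact hx
    obtain ⟨l0, hl0⟩ := hout
    have hln : l0 ≤ (n : ℤ) := by
      by_contra hc
      push_neg at hc
      exact hl0 (hSmono hc.le hnS)
    have hstep : ∃ t, t ∉ S ∧ t + 1 ∈ S := by
      refine pb_exists_step S ((n : ℤ) - l0).toNat l0 hl0 ?_
      rw [Int.toNat_of_nonneg (by omega)]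
      have : l0 + ((n : ℤ) - l0) = (n : ℤ) := by ring
      rw [this]
      exact hnS
    obtain ⟨t, htS0, htS1⟩ := hstep
    refine ⟨t, ?_⟩
    have hmem : x ∈ ⇑(F ^ t) '' ((⇑f '' b i) \ b i) := by
      rw [← hco, Set.image_diff (F ^ t).injective, pb_image_zpow_image]
      exact ⟨htS1, htS0⟩
    exact Set.image_mono (Set.subset_iUnion (fun i => (⇑f '' b i) \ b i) i) hmem
  · rintro ⟨k, hk⟩
    rw [Set.image_iUnion, Set.mem_iUnion] at hk
    obtain ⟨i, hi⟩ := hk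
    rw [← hco, Set.image_diff (F ^ k).injective, pb_image_zpow_image] at hi
    obtain ⟨hx1, hx0⟩ := hi
    -- x ∉ A
    have hxA : x ∉ A := by
      intro hxA
      set n : ℕ := (max (k + 1) 0).toNat with hndef
      have hkn : k + 1 ≤ (n : ℤ) := by
        rw [hndef, Int.toNat_of_nonneg (le_max_right _ _)]
        exact le_max_left _ _
      have hxn : x ∈ ⇑(F ^ (n : ℤ)) '' b i := hmono i hkn hx1
      have h1 : ⇑(F ^ (-(n : ℤ))) x ∈ b i := (pb_mem_zpow_image F _ _ x).1 hxn
      have h2 := (hAiff x).1 hxA n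
      exact h2 (Set.mem_iUnion.2 ⟨i, h1⟩)
    refine ⟨?_, hxA⟩
    intro y hy
    rcases hω x hy with hq | hσ
    · obtain ⟨i', rfl⟩ := hq
      exfalso
      have hxq : x = q i' := hqomega i' x hy
      -- q i' ∈ F^(k+1) '' b i, hence q i' ∈ b i
      have hq1 : q i' ∈ ⇑(F ^ (k + 1)) '' b i := hxq ▸ hx1
      have hq2 : q i' ∈ b i := by
        have := (pb_mem_zpow_image F (k + 1) (b i) (q i')).1 hq1
        rwa [hqfix i'] at this
      by_cases hii : i = i'
      · subst hii
        refine hx0 ?_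
        rw [hxq]
        exact (pb_mem_zpow_image F k (b i) (q i)).2 (by rw [hqfix]; exact hqb i)
      · exact Set.disjoint_left.mp (hbdisj i i' hii) hq2 (hqb i')
    · obtain ⟨j, hj⟩ := Set.mem_iUnion.1 hσ
      exact hσA j hj
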